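/- (Alzer–Kwong) For every positive integer m and every natural number ν with 0 ≤ ν ≤ m, one has ∑_{k=0, k+m odd}^{m-1} C(m,k)·C(k+m,ν)·C(k+m−ν, m−ν)·B_k = (−1)^{m+1}·(m(m+1)/2)·C(m,ν), where the sum on the left runs only over those indices k in {0,…,m−1} for which k+m is odd. -/

import Mathlib

open Finset

lemma diff_lemma (r : ℕ) : ∀ n, n ≤ r → ∀ a : ℕ,
    ∑ i ∈ range (n+1), (-1:ℚ)^i * (n.choose i) * ((a+i).choose r)
      = (-1:ℚ)^n * (a.choose (r-n)) := by
  intro n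
  induction n with
  | zero => intro _ a; simp
  | succ n ih =>
    intro hn a
    have hn' : n ≤ r := Nat.le_of_succ_le hn
    have key : ∑ i ∈ range (n+2), (-1:ℚ)^i * ((n+1).choose i) * ((a+i).choose r)
        = (∑ i ∈ range (n+1), (-1:ℚ)^i * (n.choose i) * ((a+i).choose r))
          - (∑ i ∈ range (n+1), (-1:ℚ)^i * (n.choose i) * ((a+1+i).choose r)) := by
      rw [Finset.sum_range_succ' (fun i => (-1:ℚ)^i * ((n+1).choose i) * ((a+i).choose r)) (n+1)]
      have step1 : ∑ i ∈ range (n+1), (-1:ℚ)^(i+1) * ((n+1).choose (i+1)) * ((a+(i+1)).choose r)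
          = (∑ i ∈ range (n+1), (-1:ℚ)^(i+1) * (n.choose (i+1)) * ((a+1+i).choose r))
            - ∑ i ∈ range (n+1), (-1:ℚ)^i * (n.choose i) * ((a+1+i).choose r) := by
        rw [eq_sub_iff_add_eq, ← Finset.sum_add_distrib]
        apply Finset.sum_congr rfl
        intro i _
        have h2 : a + (i+1) = a+1+i := by ring
        rw [h2, Nat.choose_succ_succ']
        push_cast
        ring
      rw [step1]
      have step2 : (∑ i ∈ range (n+1), (-1:ℚ)^(i+1) * (n.choose (i+1)) * ((a+1+i).choose r))
            + (-1:ℚ)^0 * (((n+1).choose 0 : ℕ) : ℚ) * ((a+0).choose r)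
          = ∑ i ∈ range (n+1), (-1:ℚ)^i * (n.choose i) * ((a+i).choose r) := by
        have e := Finset.sum_range_succ' (fun i => (-1:ℚ)^i * (n.choose i) * ((a+i).choose r)) (n+1)
        rw [Finset.sum_range_succ] at e
        simp only [Nat.choose_succ_self, Nat.cast_zero, mul_zero, zero_mul, add_zero] at e
        rw [e]
        simp only [pow_zero, Nat.choose_zero_right, Nat.cast_one, one_mul, add_zero, Nat.add_zero]
        congr 1
        apply Finset.sum_congr rfl
        intro i _
        have h2 : a + (i+1) = a+1+i := by ring
        rw [h2]
      rw [← step2]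
      simp only [Nat.choose_zero_right]
      ring
    rw [key, ih hn' a, ih hn' (a+1)]
    have hsub : r - n = (r - (n+1)) + 1 := by omega
    have pas : ((a+1).choose (r-n) : ℚ) = a.choose (r - (n+1)) + a.choose (r-n) := by
      rw [hsub, Nat.choose_succ_succ']; push_cast; rw [← hsub]
    rw [hsub] at pas ⊢
    rw [pas]; ring

lemma leg_symm (m j : ℕ) (hj : j ≤ m) :
    ∑ k ∈ range (m+1), (-1:ℚ)^k * (m.choose k) * ((k+m).choose m) * (k.choose j)
      = (-1:ℚ)^m * (m.choose j) * ((j+m).choose m) := by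
  have hsub : Finset.Ico j (m+1) ⊆ range (m+1) := by
    intro x hx; rw [Finset.mem_Ico] at hx; exact Finset.mem_range.mpr hx.2
  rw [← Finset.sum_subset hsub (by
    intro x hx hnx
    have : x < j := by
      rw [Finset.mem_range] at hx; rw [Finset.mem_Ico] at hnx; omega
    rw [Nat.choose_eq_zero_of_lt this]; simp)]
  rw [Finset.sum_Ico_eq_sum_range]
  have hlen : m + 1 - j = (m - j) + 1 := by omega
  rw [hlen]
  have hterm : ∀ i ∈ range ((m-j)+1),
      (-1:ℚ)^(j+i) * (m.choose (j+i)) * ((j+i+m).choose m) * ((j+i).choose j)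
      = ((-1:ℚ)^j * (m.choose j)) * ((-1:ℚ)^i * ((m-j).choose i) * (((m+j)+i).choose m)) := by
    intro i hi
    rw [Finset.mem_range] at hi
    have hle : j + i ≤ m := by omega
    have hmul : m.choose (j+i) * (j+i).choose j = m.choose j * (m-j).choose i := by
      have := Nat.choose_mul (n := m) (Nat.le_add_right j i)
      simpa using this
    have hmul' : (m.choose (j+i) : ℚ) * ((j+i).choose j) = (m.choose j) * ((m-j).choose i) := by
      exact_mod_cast congrArg (Nat.cast : ℕ → ℚ) hmul
    have harg : j + i + m = m + j + i := by ring
    rw [harg, pow_add]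
    linear_combination ((-1:ℚ)^j*(-1:ℚ)^i*(((m+j+i).choose m : ℕ) : ℚ)) * hmul'
  rw [Finset.sum_congr rfl hterm, ← Finset.mul_sum, diff_lemma m (m-j) (Nat.sub_le m j) (m+j)]
  have h1 : m - (m - j) = j := by omega
  have h2 : (m + j).choose j = (j + m).choose m := by
    rw [Nat.add_comm m j]; exact Nat.choose_symm_add
  rw [h1, h2]
  have h3 : (-1:ℚ)^j * (-1:ℚ)^(m-j) = (-1:ℚ)^m := by
    rw [← pow_add]; congr 1; omega
  linear_combination ((m.choose j : ℚ) * (((j+m).choose m : ℕ) : ℚ)) * h3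

lemma bern_refl (k : ℕ) :
    bernoulli k = (-1:ℚ)^k * ∑ j ∈ range (k+1), (k.choose j : ℚ) * bernoulli j := by
  rw [Finset.sum_range_succ, sum_bernoulli, Nat.choose_self]
  rcases Nat.even_or_odd k with he | ho
  · have h1 : k ≠ 1 := by rintro rfl; exact (Nat.not_even_iff_odd.mpr odd_one) he
    simp [h1, he.neg_one_pow]
  · by_cases h1 : k = 1
    · subst h1; norm_num [bernoulli_one]
    · have hz : bernoulli k = 0 := by
        rw [bernoulli_eq_bernoulli'_of_ne_one h1]
        refine bernoulli'_eq_zero_of_odd ho ?_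
        rcases ho with ⟨t, rfl⟩; omega
      simp [h1, hz]

lemma U_eq_zero (m : ℕ) (hm : Odd m) :
    ∑ k ∈ range (m+1), (m.choose k : ℚ) * ((k+m).choose m) * bernoulli k = 0 := by
  set U := ∑ k ∈ range (m+1), (m.choose k : ℚ) * ((k+m).choose m) * bernoulli k with hU
  have key : U = -U := by
    calc U = ∑ k ∈ range (m+1), ∑ j ∈ range (m+1),
        (-1:ℚ)^k * (m.choose k) * ((k+m).choose m) * (k.choose j) * bernoulli j := by
          apply Finset.sum_congr rfl
          intro k hk
          rw [Finset.mem_range] at hk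
          rw [bern_refl k, Finset.mul_sum]
          have hsub : range (k+1) ⊆ range (m+1) := by
            apply Finset.range_subset_range.mpr; omega
          rw [← Finset.sum_subset hsub (by
            intro x hx hnx
            rw [Finset.mem_range, Nat.lt_succ_iff, Nat.not_le] at hnx
            rw [Nat.choose_eq_zero_of_lt hnx]; simp)]
          rw [Finset.mul_sum]
          apply Finset.sum_congr rfl
          intro j _
          ring
      _ = ∑ j ∈ range (m+1), (∑ k ∈ range (m+1),
            (-1:ℚ)^k * (m.choose k) * ((k+m).choose m) * (k.choose j)) * bernoulli j := by
          rw [Finset.sum_comm]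
          apply Finset.sum_congr rfl
          intro j _
          rw [Finset.sum_mul]
      _ = ∑ j ∈ range (m+1), ((-1:ℚ)^m * (m.choose j) * ((j+m).choose m)) * bernoulli j := by
          apply Finset.sum_congr rfl
          intro j hj
          rw [Finset.mem_range, Nat.lt_succ_iff] at hj
          rw [leg_symm m j hj]
      _ = -U := by
          rw [hU, ← Finset.sum_neg_distrib]
          apply Finset.sum_congr rfl
          intro j _
          rw [hm.neg_one_pow]
          ring
  linarith

lemma S_eq (m : ℕ) (hm : 0 < m) :
    ∑ k ∈ (Finset.range m).filter (fun k => Odd (k + m)),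
      (m.choose k : ℚ) * ((k + m).choose m) * bernoulli k
    = (-1 : ℚ) ^ (m + 1) * (m * (m + 1) / 2) := by
  rcases Nat.even_or_odd m with he | ho
  · -- m even, only k = 1 contributes
    have hm2 : 2 ≤ m := by
      rcases he with ⟨t, rfl⟩; omega
    rw [Finset.sum_eq_single_of_mem 1 (by
        rw [Finset.mem_filter, Finset.mem_range]
        refine ⟨by omega, ?_⟩
        rcases he with ⟨t, ht⟩; exact ⟨t, by omega⟩)
      (by
        intro k hk hk1
        rw [Finset.mem_filter] at hk
        have hodd : Odd k := by
          rcases hk.2 with ⟨t, ht⟩; rcases he with ⟨s, hs⟩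
          refine ⟨t - s, by omega⟩
        have hz : bernoulli k = 0 := by
          rw [bernoulli_eq_bernoulli'_of_ne_one hk1]
          refine bernoulli'_eq_zero_of_odd hodd ?_
          rcases hodd with ⟨t, rfl⟩; omega
        rw [hz, mul_zero])]
    rw [bernoulli_one, Nat.choose_one_right, Nat.add_comm 1 m, Nat.choose_succ_self_right]
    have hpow : (-1:ℚ)^(m+1) = -1 := (he.add_one).neg_one_pow
    rw [hpow]
    push_cast
    ring
  · -- m odd
    have hfe : (Finset.range m).filter (fun k => Odd (k + m))
        = (Finset.range (m+1)).filter (fun k => ¬ Odd k) := by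
      apply Finset.ext
      intro k
      simp only [Finset.mem_filter, Finset.mem_range, Nat.odd_iff, Nat.not_odd_iff]
      rcases ho with ⟨t, ht⟩
      constructor
      · rintro ⟨h1, h2⟩; exact ⟨by omega, by omega⟩
      · rintro ⟨h1, h2⟩; exact ⟨by omega, by omega⟩
    rw [hfe]
    have hsplit := Finset.sum_filter_add_sum_filter_not (Finset.range (m+1))
      (fun k => Odd k) (fun k => (m.choose k : ℚ) * ((k + m).choose m) * bernoulli k)
    have hU := U_eq_zero m ho
    have hoddsum : ∑ k ∈ (Finset.range (m+1)).filter (fun k => Odd k),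
        (m.choose k : ℚ) * ((k + m).choose m) * bernoulli k = m * (m+1) * (-1/2) := by
      rw [Finset.sum_eq_single_of_mem 1 (by
          rw [Finset.mem_filter, Finset.mem_range]
          exact ⟨by omega, odd_one⟩)
        (by
          intro k hk hk1
          rw [Finset.mem_filter] at hk
          have hz : bernoulli k = 0 := by
            rw [bernoulli_eq_bernoulli'_of_ne_one hk1]
            refine bernoulli'_eq_zero_of_odd hk.2 ?_
            rcases hk.2 with ⟨t, rfl⟩; omega
          rw [hz, mul_zero])]
      rw [bernoulli_one, Nat.choose_one_right, Nat.add_comm 1 m, Nat.choose_succ_self_right]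
      push_cast; ring
    have hpow : (-1:ℚ)^(m+1) = 1 := (ho.add_one).neg_one_pow
    rw [hpow]
    rw [hoddsum, hU] at hsplit
    linarith

theorem alzer_kwong_numbers_1 (m : ℕ) (hm : 0 < m) (ν : ℕ) (hν : ν ≤ m) :
    ∑ k ∈ (Finset.range m).filter (fun k => Odd (k + m)),
      (m.choose k : ℚ) * ((k + m).choose ν) * ((k + m - ν).choose (m - ν)) * bernoulli k
    = (-1 : ℚ) ^ (m + 1) * (m * (m + 1) / 2) * (m.choose ν) := by
  have hterm : ∀ k, (m.choose k : ℚ) * ((k + m).choose ν) * ((k + m - ν).choose (m - ν)) * bernoulli k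
      = ((m.choose k : ℚ) * ((k + m).choose m) * bernoulli k) * (m.choose ν) := by
    intro k
    have h := Nat.choose_mul (n := k + m) hν
    have h' : ((k+m).choose m : ℚ) * (m.choose ν) = ((k+m).choose ν) * ((k+m-ν).choose (m-ν)) := by
      exact_mod_cast congrArg (Nat.cast : ℕ → ℚ) h
    linear_combination (-(bernoulli k * (m.choose k : ℚ))) * h'
  calc ∑ k ∈ (Finset.range m).filter (fun k => Odd (k + m)),
      (m.choose k : ℚ) * ((k + m).choose ν) * ((k + m - ν).choose (m - ν)) * bernoulli k
      = (∑ k ∈ (Finset.range m).filter (fun k => Odd (k + m)),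
          (m.choose k : ℚ) * ((k + m).choose m) * bernoulli k) * (m.choose ν) := by
        rw [Finset.sum_mul]
        exact Finset.sum_congr rfl (fun k _ => hterm k)
    _ = (-1 : ℚ) ^ (m + 1) * (m * (m + 1) / 2) * (m.choose ν) := by rw [S_eq m hm]
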